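/- Let W be a discrete real random variable, α = P[W < 0], γ = AC(W). For any event E and any δ > 2γ, P[E | F(|W|) ≤ δ] ≥ P[E | F(W) ≤ δ] · 1/(1 + (2α+γ)/(δ−γ)) − α/(δ−γ). -/

import Mathlib

open MeasureTheory ProbabilityTheory Filter Topology Function

lemma aux_upper {Ω : Type*} [MeasurableSpace Ω] (μ : Measure Ω) [IsProbabilityMeasure μ]
    (X : Ω → ℝ) (hc : (Set.range X).Countable) (δ : ℝ) (hδ : 0 ≤ δ) :
    μ {ω | (μ {ω' | X ω' ≤ X ω}).toReal ≤ δ} ≤ ENNReal.ofReal δ := by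
  set T : Set ℝ := {x | x ∈ Set.range X ∧ (μ {ω' | X ω' ≤ x}).toReal ≤ δ} with hT
  have hTc : T.Countable := hc.mono (fun x hx => hx.1)
  have hset : {ω | (μ {ω' | X ω' ≤ X ω}).toReal ≤ δ} = ⋃ x ∈ T, {ω | X ω ≤ x} := by
    ext ω
    simp only [Set.mem_setOf_eq, Set.mem_iUnion, exists_prop]
    constructor
    · intro h
      exact ⟨X ω, ⟨⟨ω, rfl⟩, h⟩, le_rfl⟩
    · rintro ⟨x, ⟨-, hx2⟩, hωx⟩
      have hincl : {ω' | X ω' ≤ X ω} ⊆ {ω' | X ω' ≤ x} := by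
        intro ω' h'
        have h'' : X ω' ≤ X ω := h'
        exact le_trans h'' hωx
      exact le_trans (ENNReal.toReal_mono (measure_ne_top μ _) (measure_mono hincl)) hx2
  have hd : DirectedOn ((· ⊆ ·) on fun x : ℝ => {ω | X ω ≤ x}) T := by
    intro x hx y hy
    rcases le_total x y with h | h
    · refine ⟨y, hy, ?_, ?_⟩
      · intro ω hω
        have hω' : X ω ≤ x := hω
        show X ω ≤ y
        linarith
      · intro ω hω
        exact hω
    · refine ⟨x, hx, ?_, ?_⟩
      · intro ω hω
        exact hω
      · intro ω hω
        have hω' : X ω ≤ y := hω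
        show X ω ≤ x
        linarith
  have key : μ (⋃ x ∈ T, {ω | X ω ≤ x}) = ⨆ x ∈ T, μ {ω | X ω ≤ x} :=
    measure_biUnion_eq_iSup hTc hd
  rw [hset, key]
  refine iSup_le fun x => iSup_le fun hx => ?_
  exact (ENNReal.le_ofReal_iff_toReal_le (measure_ne_top μ _) hδ).2 hx.2

lemma aux_lower {Ω : Type*} [MeasurableSpace Ω] (μ : Measure Ω) [IsProbabilityMeasure μ]
    (X : Ω → ℝ) (hX : Measurable X) (δ g : ℝ) (hδ0 : 0 < δ) (hδ1 : δ < 1)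
    (hg : ∀ x, (μ {ω | X ω = x}).toReal ≤ g) :
    δ - g ≤ (μ {ω | (μ {ω' | X ω' ≤ X ω}).toReal ≤ δ}).toReal := by
  set S : Set ℝ := {x | (μ {ω | X ω ≤ x}).toReal ≤ δ} with hS
  -- S is nonempty
  have hne : S.Nonempty := by
    have hanti : Antitone (fun n : ℕ => {ω | X ω ≤ -(n : ℝ)}) := by
      intro n m hnm ω hω
      have h1 : X ω ≤ -(m : ℝ) := hω
      have h2 : (n : ℝ) ≤ (m : ℝ) := Nat.cast_le.mpr hnm
      show X ω ≤ -(n : ℝ)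
      linarith
    have htend : Tendsto (fun n : ℕ => μ {ω | X ω ≤ -(n : ℝ)}) atTop
        (𝓝 (μ (⋂ n : ℕ, {ω | X ω ≤ -(n : ℝ)}))) :=
      tendsto_measure_iInter_atTop
        (fun n => (hX measurableSet_Iic).nullMeasurableSet) hanti ⟨0, measure_ne_top μ _⟩
    have hempty : (⋂ n : ℕ, {ω | X ω ≤ -(n : ℝ)}) = ∅ := by
      ext ω
      simp only [Set.mem_iInter, Set.mem_setOf_eq, Set.mem_empty_iff_false, iff_false, not_forall]
      obtain ⟨n, hn⟩ := exists_nat_gt (-X ω)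
      refine ⟨n, ?_⟩
      intro hcon
      linarith
    rw [hempty, measure_empty] at htend
    have hev := htend.eventually_lt_const (ENNReal.ofReal_pos.mpr hδ0)
    obtain ⟨n, hn⟩ := hev.exists
    exact ⟨-(n : ℝ), ENNReal.toReal_le_of_le_ofReal hδ0.le hn.le⟩
  -- S is bounded above
  have hbdd : BddAbove S := by
    have hmono : Monotone (fun n : ℕ => {ω | X ω ≤ (n : ℝ)}) := by
      intro n m hnm ω hω
      have h1 : X ω ≤ (n : ℝ) := hω
      have h2 : (n : ℝ) ≤ (m : ℝ) := Nat.cast_le.mpr hnm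
      show X ω ≤ (m : ℝ)
      linarith
    have htend : Tendsto (fun n : ℕ => μ {ω | X ω ≤ (n : ℝ)}) atTop
        (𝓝 (μ (⋃ n : ℕ, {ω | X ω ≤ (n : ℝ)}))) :=
      tendsto_measure_iUnion_atTop hmono
    have huniv : (⋃ n : ℕ, {ω | X ω ≤ (n : ℝ)}) = Set.univ := by
      ext ω
      simp only [Set.mem_iUnion, Set.mem_setOf_eq, Set.mem_univ, iff_true]
      obtain ⟨n, hn⟩ := exists_nat_gt (X ω)
      exact ⟨n, hn.le⟩
    rw [huniv, measure_univ] at htend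
    have hlt : ENNReal.ofReal δ < 1 := by
      rw [← ENNReal.ofReal_one]
      exact (ENNReal.ofReal_lt_ofReal_iff_of_nonneg hδ0.le).2 hδ1
    obtain ⟨n, hn⟩ := (htend.eventually_const_lt hlt).exists
    refine ⟨(n : ℝ), fun x hx => ?_⟩
    by_contra hgt
    push_neg at hgt
    have h1 : μ {ω | X ω ≤ (n : ℝ)} ≤ μ {ω | X ω ≤ x} := by
      refine measure_mono ?_
      intro ω hω
      have h' : X ω ≤ (n : ℝ) := hω
      show X ω ≤ x
      linarith
    have h2 : δ < (μ {ω | X ω ≤ (n : ℝ)}).toReal := by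
      have := (ENNReal.toReal_lt_toReal (by simp) (measure_ne_top μ _)).2 hn
      simpa [ENNReal.toReal_ofReal hδ0.le] using this
    have h3 : (μ {ω | X ω ≤ x}).toReal ≤ δ := hx
    have h4 := ENNReal.toReal_mono (measure_ne_top μ _) h1
    linarith
  set x' := sSup S with hx'
  -- the event contains {X < x'}
  have hsub : {ω | X ω < x'} ⊆ {ω | (μ {ω' | X ω' ≤ X ω}).toReal ≤ δ} := by
    intro ω hω
    have hω' : X ω < x' := hω
    obtain ⟨s, hsS, hlt⟩ := exists_lt_of_lt_csSup hne hω'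
    have hincl : {ω' | X ω' ≤ X ω} ⊆ {ω' | X ω' ≤ s} := by
      intro ω' h'
      have h'' : X ω' ≤ X ω := h'
      show X ω' ≤ s
      linarith
    exact le_trans (ENNReal.toReal_mono (measure_ne_top μ _) (measure_mono hincl)) hsS
  -- right continuity: μ {X ≤ x'} ≥ δ
  have hrc : ENNReal.ofReal δ ≤ μ {ω | X ω ≤ x'} := by
    have hanti : Antitone (fun n : ℕ => {ω | X ω ≤ x' + 1 / ((n : ℝ) + 1)}) := by
      intro n m hnm ω hω
      have h1 : X ω ≤ x' + 1 / ((m : ℝ) + 1) := hω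
      have h3 : 1 / ((m : ℝ) + 1) ≤ 1 / ((n : ℝ) + 1) := by
        apply one_div_le_one_div_of_le (by positivity)
        have : (n : ℝ) ≤ (m : ℝ) := Nat.cast_le.mpr hnm
        linarith
      show X ω ≤ x' + 1 / ((n : ℝ) + 1)
      linarith
    have htend : Tendsto (fun n : ℕ => μ {ω | X ω ≤ x' + 1 / ((n : ℝ) + 1)}) atTop
        (𝓝 (μ (⋂ n : ℕ, {ω | X ω ≤ x' + 1 / ((n : ℝ) + 1)}))) :=
      tendsto_measure_iInter_atTop
        (fun n => (hX measurableSet_Iic).nullMeasurableSet) hanti ⟨0, measure_ne_top μ _⟩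
    have hInter : (⋂ n : ℕ, {ω | X ω ≤ x' + 1 / ((n : ℝ) + 1)}) = {ω | X ω ≤ x'} := by
      ext ω
      simp only [Set.mem_iInter, Set.mem_setOf_eq]
      constructor
      · intro h
        by_contra hcon
        push_neg at hcon
        obtain ⟨n, hn⟩ := exists_nat_one_div_lt (by linarith : (0 : ℝ) < X ω - x')
        have := h n
        linarith
      · intro h n
        have hpos : (0 : ℝ) < 1 / ((n : ℝ) + 1) := by positivity
        linarith
    rw [hInter] at htend
    refine ge_of_tendsto htend (Filter.Eventually.of_forall fun n => ?_)
    have hnotS : x' + 1 / ((n : ℝ) + 1) ∉ S := by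
      intro hmem
      have hle := le_csSup hbdd hmem
      have hpos : (0 : ℝ) < 1 / ((n : ℝ) + 1) := by positivity
      rw [← hx'] at hle
      linarith
    have hgt : δ < (μ {ω | X ω ≤ x' + 1 / ((n : ℝ) + 1)}).toReal := by
      by_contra hcon
      push_neg at hcon
      exact hnotS hcon
    exact ENNReal.ofReal_le_of_le_toReal hgt.le
  -- put it together
  have hdiff : μ {ω | X ω < x'} = μ {ω | X ω ≤ x'} - μ {ω | X ω = x'} := by
    have hseteq : {ω | X ω < x'} = {ω | X ω ≤ x'} \ {ω | X ω = x'} := by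
      ext ω
      simp only [Set.mem_setOf_eq, Set.mem_diff]
      exact lt_iff_le_and_ne
    rw [hseteq]
    exact measure_diff (fun ω hω => le_of_eq hω)
      (hX (measurableSet_singleton x')).nullMeasurableSet (measure_ne_top μ _)
  have h1 : δ ≤ (μ {ω | X ω ≤ x'}).toReal := by
    have := ENNReal.toReal_mono (measure_ne_top μ _) hrc
    simpa [ENNReal.toReal_ofReal hδ0.le] using this
  calc δ - g ≤ (μ {ω | X ω ≤ x'}).toReal - (μ {ω | X ω = x'}).toReal :=
        sub_le_sub h1 (hg x')
    _ = (μ {ω | X ω < x'}).toReal := by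
        have hsub2 : μ {ω | X ω = x'} ≤ μ {ω | X ω ≤ x'} := by
          refine measure_mono ?_
          intro ω hω
          have h' : X ω = x' := hω
          show X ω ≤ x'
          exact le_of_eq h'
        rw [hdiff, ENNReal.toReal_sub_of_le hsub2 (measure_ne_top μ _)]
    _ ≤ _ := ENNReal.toReal_mono (measure_ne_top μ _) (measure_mono hsub)

/-- Conditional comparison lemma: for a discrete real random variable `W` with
`α = P[W < 0]`, `γ = AC(W)`, any measurable event `E` and any `δ > 2γ`,
`P[E | F(|W|) ≤ δ] ≥ P[E | F(W) ≤ δ] · 1/(1 + (2α+γ)/(δ−γ)) − α/(δ−γ)`. -/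
theorem stmt_4 {Ω : Type*} [MeasurableSpace Ω] (μ : Measure Ω) [IsProbabilityMeasure μ]
    (W : Ω → ℝ) (hW : Measurable W) (hdisc : (Set.range W).Countable)
    (F Fabs : ℝ → ℝ)
    (hF : ∀ w, F w = (μ {ω | W ω ≤ w}).toReal)
    (hFabs : ∀ w, Fabs w = (μ {ω | |W ω| ≤ w}).toReal)
    (α γ : ℝ)
    (hα : α = (μ {ω | W ω < 0}).toReal)
    (hγ : γ = ⨆ w : ℝ, (μ {ω | W ω = w}).toReal)
    (E : Set Ω) (hE : MeasurableSet E)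
    (δ : ℝ) (hδ : 2 * γ < δ)
    (hpos1 : μ {ω | Fabs |W ω| ≤ δ} ≠ 0)
    (hpos2 : μ {ω | F (W ω) ≤ δ} ≠ 0) :
    (ProbabilityTheory.cond μ {ω | Fabs |W ω| ≤ δ} E).toReal ≥
      (ProbabilityTheory.cond μ {ω | F (W ω) ≤ δ} E).toReal *
        (1 / (1 + (2 * α + γ) / (δ - γ))) - α / (δ - γ) := by
  -- basic facts
  have hbddγ : BddAbove (Set.range fun w : ℝ => (μ {ω | W ω = w}).toReal) := by
    refine ⟨1, ?_⟩
    rintro _ ⟨w, rfl⟩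
    have := ENNReal.toReal_mono (measure_ne_top μ _) (measure_mono (Set.subset_univ {ω | W ω = w}))
    simpa [measure_univ] using this
  have hγatom : ∀ w, (μ {ω | W ω = w}).toReal ≤ γ := fun w => hγ ▸ le_ciSup hbddγ w
  have hγ0 : 0 ≤ γ := le_trans ENNReal.toReal_nonneg (hγatom 0)
  have hα0 : 0 ≤ α := hα ▸ ENNReal.toReal_nonneg
  have hδ0 : 0 < δ := by linarith
  have hd1 : 0 < δ - γ := by linarith
  have hd2 : 0 < δ + 2 * α := by linarith
  -- monotonicity of F and Fabs
  have hFm : Monotone F := by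
    intro x y hxy
    rw [hF, hF]
    exact ENNReal.toReal_mono (measure_ne_top μ _) (measure_mono fun ω h => le_trans h hxy)
  have hFam : Monotone Fabs := by
    intro x y hxy
    rw [hFabs, hFabs]
    exact ENNReal.toReal_mono (measure_ne_top μ _) (measure_mono fun ω h => le_trans h hxy)
  have hmA : MeasurableSet {ω | F (W ω) ≤ δ} :=
    (hFm.measurable.comp hW) measurableSet_Iic
  have hmB : MeasurableSet {ω | Fabs |W ω| ≤ δ} :=
    (hFam.measurable.comp hW.abs) measurableSet_Iic
  rcases lt_or_ge δ 1 with hδ1 | hδ1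
  · -- main case: δ < 1
    set A := {ω | F (W ω) ≤ δ} with hA
    set B := {ω | Fabs |W ω| ≤ δ} with hB
    have ha_lb : δ - γ ≤ (μ A).toReal := by
      have := aux_lower μ W hW δ γ hδ0 hδ1 hγatom
      have hseteq : {ω | (μ {ω' | W ω' ≤ W ω}).toReal ≤ δ} = A := by
        ext ω; simp [hA, hF]
      rwa [hseteq] at this
    have hb_ub : (μ B).toReal ≤ δ := by
      have hcabs : (Set.range fun ω => |W ω|).Countable := by
        refine (hdisc.image abs).mono ?_
        rintro _ ⟨ω, rfl⟩
        exact ⟨W ω, ⟨ω, rfl⟩, rfl⟩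
      have := aux_upper μ (fun ω => |W ω|) hcabs δ hδ0.le
      have hseteq : {ω | (μ {ω' | |W ω'| ≤ |W ω|}).toReal ≤ δ} = B := by
        ext ω; simp [hB, hFabs]
      rw [hseteq] at this
      exact ENNReal.toReal_le_of_le_ofReal hδ0.le this
    have ha : 0 < (μ A).toReal := ENNReal.toReal_pos hpos2 (measure_ne_top μ _)
    have hb : 0 < (μ B).toReal := ENNReal.toReal_pos hpos1 (measure_ne_top μ _)
    -- key inclusion: A ∩ E ⊆ (B ∩ E) ∪ {W < 0}
    have hab : (μ (A ∩ E)).toReal ≤ (μ (B ∩ E)).toReal + α := by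
      have hsub : A ∩ E ⊆ (B ∩ E) ∪ {ω | W ω < 0} := by
        rintro ω ⟨hAω, hEω⟩
        by_cases h0 : W ω < 0
        · exact Or.inr h0
        · push_neg at h0
          refine Or.inl ⟨?_, hEω⟩
          show Fabs |W ω| ≤ δ
          rw [abs_of_nonneg h0, hFabs]
          refine le_trans ?_ (le_trans (le_of_eq (hF (W ω)).symm) hAω)
          refine ENNReal.toReal_mono (measure_ne_top μ _) (measure_mono ?_)
          intro ω' h'
          exact le_trans (le_abs_self (W ω')) h'
      calc (μ (A ∩ E)).toReal ≤ (μ ((B ∩ E) ∪ {ω | W ω < 0})).toReal :=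
            ENNReal.toReal_mono (measure_ne_top μ _) (measure_mono hsub)
        _ ≤ ((μ (B ∩ E)) + μ {ω | W ω < 0}).toReal :=
            ENNReal.toReal_mono (by simp [measure_ne_top]) (measure_union_le _ _)
        _ = (μ (B ∩ E)).toReal + α := by
            rw [ENNReal.toReal_add (measure_ne_top μ _) (measure_ne_top μ _), hα]
    -- rewrite the conditional probabilities
    rw [ProbabilityTheory.cond_apply hmB, ProbabilityTheory.cond_apply hmA,
      ENNReal.toReal_mul, ENNReal.toReal_mul, ENNReal.toReal_inv, ENNReal.toReal_inv]
    set a := (μ A).toReal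
    set b := (μ B).toReal
    set pA := (μ (A ∩ E)).toReal with hpA
    set pB := (μ (B ∩ E)).toReal with hpB
    have hpA0 : 0 ≤ pA := ENNReal.toReal_nonneg
    have hpB0 : 0 ≤ pB := ENNReal.toReal_nonneg
    have hfac : 1 / (1 + (2 * α + γ) / (δ - γ)) = (δ - γ) / (δ + 2 * α) := by
      have hsum : 1 + (2 * α + γ) / (δ - γ) = (δ + 2 * α) / (δ - γ) := by
        field_simp
        ring
      rw [hsum, one_div_div]
    rw [hfac, ge_iff_le, sub_le_iff_le_add, inv_mul_eq_div, inv_mul_eq_div,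
      div_mul_div_comm, div_add_div _ _ (ne_of_gt hb) (ne_of_gt hd1),
      div_le_div_iff₀ (by positivity) (by positivity)]
    -- polynomial inequality
    rcases le_or_gt pA α with hcase | hcase
    · have h1 : (δ - γ) * (δ - γ) ≤ a * (δ + 2 * α) :=
        mul_le_mul ha_lb (by linarith) hd1.le ha.le
      have e1 : pA * (δ - γ) * (b * (δ - γ)) ≤ α * b * ((δ - γ) * (δ - γ)) := by
        nlinarith [mul_nonneg (sub_nonneg.2 hcase)
          (mul_nonneg hb.le (mul_nonneg hd1.le hd1.le))]
      have e2 : α * b * ((δ - γ) * (δ - γ)) ≤ α * b * (a * (δ + 2 * α)) :=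
        mul_le_mul_of_nonneg_left h1 (mul_nonneg hα0 hb.le)
      have e3 : 0 ≤ pB * (δ - γ) * (a * (δ + 2 * α)) := by positivity
      nlinarith [e1, e2, e3]
    · have hd2b : b ≤ δ + 2 * α := by linarith
      nlinarith [mul_nonneg (mul_nonneg (sub_nonneg.2 hcase.le) hd1.le) (sub_nonneg.2 hd2b),
        mul_nonneg (mul_nonneg hα0 hb.le) (by linarith : (0:ℝ) ≤ (δ + 2*α) - (δ - γ)),
        mul_nonneg (sub_nonneg.2 ha_lb) (mul_nonneg (add_nonneg (mul_nonneg (by linarith : (0:ℝ) ≤ pA - α) hd1.le) (mul_nonneg hα0 hb.le)) hd2.le),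
        mul_nonneg (mul_nonneg hd1.le (sub_nonneg.2 (by linarith : pA - α ≤ pB))) (mul_nonneg ha.le hd2.le),
        mul_nonneg hd1.le (mul_nonneg (mul_nonneg hα0 hb.le) (by linarith : (0:ℝ) ≤ (δ + 2*α) - (δ - γ)))]
  · -- degenerate case: δ ≥ 1, both events are the whole space
    have hle1 : ∀ s : Set Ω, (μ s).toReal ≤ 1 := fun s => by
      have := ENNReal.toReal_mono (measure_ne_top μ _) (measure_mono (Set.subset_univ s))
      simpa [measure_univ] using this
    have hAuniv : {ω | F (W ω) ≤ δ} = Set.univ := by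
      ext ω; simp only [Set.mem_setOf_eq, Set.mem_univ, iff_true]
      rw [hF]; exact le_trans (hle1 _) hδ1
    have hBuniv : {ω | Fabs |W ω| ≤ δ} = Set.univ := by
      ext ω; simp only [Set.mem_setOf_eq, Set.mem_univ, iff_true]
      rw [hFabs]; exact le_trans (hle1 _) hδ1
    rw [hAuniv, hBuniv, ProbabilityTheory.cond_univ]
    set p := (μ E).toReal
    have hp0 : 0 ≤ p := ENNReal.toReal_nonneg
    have hx0 : 0 ≤ (2 * α + γ) / (δ - γ) := div_nonneg (by linarith) hd1.le
    have h1 : 1 / (1 + (2 * α + γ) / (δ - γ)) ≤ 1 := by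
      rw [div_le_one (by linarith)]; linarith
    have h2 : 0 ≤ α / (δ - γ) := div_nonneg hα0 hd1.le
    nlinarith [mul_le_of_le_one_right hp0 h1]
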